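/- For every point (x,y,z) ∈ ℝ³, the forward flow (x_t,y_t,z_t) of W = −z²x ∂x − z²y ∂y − (x²+y²)z ∂z converges pointwise as t → ∞ to p_X(x,y,z), where with f = x²+y²−z², r = √(x²+y²): p_X(x,y,z) = ((x/r)√f, (y/r)√f, 0) if f > 0; p_X = (0,0,0) if f = 0; and p_X(x,y,z) = (0,0, sign(z)√(−f)) if f < 0. -/

import Mathlib

/-- f(x,y,z) = x² + y² − z². -/
def fCas (p : ℝ × ℝ × ℝ) : ℝ := p.1 ^ 2 + p.2.1 ^ 2 - p.2.2 ^ 2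

/-- The vector field W = −z²x ∂x − z²y ∂y − (x²+y²)z ∂z. -/
def Wfield (p : ℝ × ℝ × ℝ) : ℝ × ℝ × ℝ :=
  (-(p.2.2 ^ 2) * p.1, -(p.2.2 ^ 2) * p.2.1, -(p.1 ^ 2 + p.2.1 ^ 2) * p.2.2)

/-- κ(s) = ∫₀² e^{−su} du = (1 − e^{−2s})/s, with κ(0) = 2. -/
noncomputable def kap (s : ℝ) : ℝ := ∫ u in (0:ℝ)..2, Real.exp (-(s * u))

/-- g_t = (1 + t z² κ(tf))^{−1/2}. -/
noncomputable def gfun (t : ℝ) (p : ℝ × ℝ × ℝ) : ℝ :=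
  1 / Real.sqrt (1 + t * p.2.2 ^ 2 * kap (t * fCas p))

/-- ḡ_t = (1 + t r² κ(−tf))^{−1/2}. -/
noncomputable def gbar (t : ℝ) (p : ℝ × ℝ × ℝ) : ℝ :=
  1 / Real.sqrt (1 + t * (p.1 ^ 2 + p.2.1 ^ 2) * kap (-(t * fCas p)))

/-- The explicit forward flow of W: (x g_t, y g_t, z ḡ_t). -/
noncomputable def flowW (p : ℝ × ℝ × ℝ) (t : ℝ) : ℝ × ℝ × ℝ :=
  (p.1 * gfun t p, p.2.1 * gfun t p, p.2.2 * gbar t p)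

/-- The retraction p_X to the "cohomological skeleton" X = {x=y=0} ∪ {z=0}. -/
noncomputable def pX (p : ℝ × ℝ × ℝ) : ℝ × ℝ × ℝ :=
  if 0 < fCas p then
    (p.1 / Real.sqrt (p.1 ^ 2 + p.2.1 ^ 2) * Real.sqrt (fCas p),
     p.2.1 / Real.sqrt (p.1 ^ 2 + p.2.1 ^ 2) * Real.sqrt (fCas p), 0)
  else if fCas p < 0 then
    (0, 0, Real.sign p.2.2 * Real.sqrt (-(fCas p)))
  else 0

open Filter Real

lemma kap_zero : kap 0 = 2 := by
  simp [kap]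

lemma kap_ne {s : ℝ} (hs : s ≠ 0) : kap s = (1 - Real.exp (-(2 * s))) / s := by
  have h : ∀ u ∈ Set.uIcc (0:ℝ) 2,
      HasDerivAt (fun u : ℝ => -Real.exp (-(s * u)) / s) (Real.exp (-(s * u))) u := by
    intro u _
    have h1 : HasDerivAt (fun u : ℝ => -(s * u)) (-s) u := by
      simpa using ((hasDerivAt_id u).const_mul (-s))
    have h2 : HasDerivAt (fun u : ℝ => Real.exp (-(s * u))) (Real.exp (-(s * u)) * -s) u :=
      h1.exp
    have h3 := (h2.div_const s).neg
    have heq : (fun u : ℝ => -(Real.exp (-(s * u)) / s)) = fun u : ℝ => -Real.exp (-(s * u)) / s := by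
      funext v; rw [neg_div]
    simp only [Pi.neg_def] at h3; rw [heq] at h3
    refine h3.congr_deriv ?_
    rw [mul_neg, neg_div, neg_neg, mul_div_assoc, div_self hs, mul_one]
  have hint : IntervalIntegrable (fun u : ℝ => Real.exp (-(s * u))) MeasureTheory.volume 0 2 := by
    apply Continuous.intervalIntegrable
    continuity
  rw [kap, intervalIntegral.integral_eq_sub_of_hasDerivAt h hint]
  rw [mul_comm s 2]
  field_simp
  rw [mul_zero, neg_zero, Real.exp_zero]; ring

lemma sqrt_tendsto_atTop : Tendsto Real.sqrt atTop atTop := by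
  refine tendsto_atTop_atTop.2 fun b => ⟨b ^ 2, fun a ha => ?_⟩
  calc b ≤ |b| := le_abs_self b
    _ = Real.sqrt (b ^ 2) := (Real.sqrt_sq_eq_abs b).symm
    _ ≤ Real.sqrt a := Real.sqrt_le_sqrt ha

lemma tendsto_tc_kap_pos (c : ℝ) {f : ℝ} (hf : 0 < f) :
    Tendsto (fun t : ℝ => t * c * kap (t * f)) atTop (nhds (c / f)) := by
  have hexp : Tendsto (fun t : ℝ => Real.exp (-(2 * (t * f)))) atTop (nhds 0) := by
    have h1 : Tendsto (fun t : ℝ => -(2 * (t * f))) atTop atBot := by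
      refine tendsto_neg_atBot_iff.mpr ?_
      have : Tendsto (fun t : ℝ => t * (2 * f)) atTop atTop :=
        Tendsto.atTop_mul_const (by linarith) tendsto_id
      exact this.congr fun t => by ring
    exact Real.tendsto_exp_atBot.comp h1
  have key : Tendsto (fun t : ℝ => c * (1 - Real.exp (-(2 * (t * f)))) / f) atTop
      (nhds (c / f)) := by
    have := ((hexp.const_sub 1).const_mul c).div_const f
    simpa using this
  refine key.congr' ?_
  filter_upwards [eventually_gt_atTop (0:ℝ)] with t ht
  rw [kap_ne (mul_pos ht hf).ne']
  field_simp

lemma tendsto_tc_kap_neg {c f : ℝ} (hc : 0 < c) (hf : f < 0) :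
    Tendsto (fun t : ℝ => t * c * kap (t * f)) atTop atTop := by
  have hexp : Tendsto (fun t : ℝ => Real.exp (-(2 * (t * f)))) atTop atTop := by
    have h1 : Tendsto (fun t : ℝ => -(2 * (t * f))) atTop atTop := by
      have : Tendsto (fun t : ℝ => t * (-(2 * f))) atTop atTop :=
        Tendsto.atTop_mul_const (by linarith) tendsto_id
      exact this.congr fun t => by ring
    exact Real.tendsto_exp_atTop.comp h1
  have key : Tendsto (fun t : ℝ => (Real.exp (-(2 * (t * f))) - 1) * (c / (-f))) atTop atTop := by
    refine Tendsto.atTop_mul_const (div_pos hc (by linarith)) ?_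
    exact (tendsto_atTop_add_const_right _ (-1) hexp).congr fun t => by ring
  refine key.congr' ?_
  filter_upwards [eventually_gt_atTop (0:ℝ)] with t ht
  rw [kap_ne (mul_neg_of_pos_of_neg ht hf).ne]
  field_simp [ht.ne', hf.ne]
  ring

lemma tendsto_invsqrt_atTop {A : ℝ → ℝ} (h : Tendsto A atTop atTop) :
    Tendsto (fun t => 1 / Real.sqrt (1 + A t)) atTop (nhds 0) := by
  have h1 : Tendsto (fun t => Real.sqrt (1 + A t)) atTop atTop :=
    sqrt_tendsto_atTop.comp (tendsto_atTop_add_const_left _ 1 h)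
  simpa [one_div, Pi.inv_def] using h1.inv_tendsto_atTop

lemma tendsto_invsqrt_nhds {A : ℝ → ℝ} {L : ℝ} (hL : 0 < 1 + L) (h : Tendsto A atTop (nhds L)) :
    Tendsto (fun t => 1 / Real.sqrt (1 + A t)) atTop (nhds (1 / Real.sqrt (1 + L))) := by
  have hc : ContinuousAt (fun a : ℝ => 1 / Real.sqrt (1 + a)) L := by
    have hne : Real.sqrt (1 + L) ≠ 0 := by positivity
    exact ContinuousAt.div continuousAt_const
      (Real.continuous_sqrt.continuousAt.comp (continuousAt_const.add continuousAt_id)) hne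
  exact hc.tendsto.comp h

/-- The forward flow of W converges pointwise, as t → ∞, to the retraction p_X. -/
theorem flowW_tendsto_pX (p : ℝ × ℝ × ℝ) :
    Filter.Tendsto (fun t => flowW p t) Filter.atTop (nhds (pX p)) := by
  obtain ⟨x, y, z⟩ := p
  have hf : fCas (x, y, z) = x ^ 2 + y ^ 2 - z ^ 2 := rfl
  have hbar : ∀ t : ℝ, gbar t (x, y, z) =
      1 / Real.sqrt (1 + t * (x ^ 2 + y ^ 2) * kap (t * (-(x ^ 2 + y ^ 2 - z ^ 2)))) := by
    intro t
    simp only [gbar, hf, mul_neg, neg_mul]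
  rcases lt_trichotomy (x ^ 2 + y ^ 2 - z ^ 2) 0 with hneg | hzero | hpos
  · -- f < 0 : z ≠ 0
    have hz2 : 0 < z ^ 2 := by nlinarith
    have hz : z ≠ 0 := by intro h; rw [h] at hz2; simp at hz2
    have hgA : Tendsto (fun t : ℝ => t * z ^ 2 * kap (t * (x ^ 2 + y ^ 2 - z ^ 2)))
        atTop atTop := tendsto_tc_kap_neg hz2 hneg
    have hg0 : Tendsto (fun t => gfun t (x, y, z)) atTop (nhds 0) := by
      refine (tendsto_invsqrt_atTop hgA).congr fun t => ?_
      simp only [gfun, hf]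
    have hnf : 0 < -(x ^ 2 + y ^ 2 - z ^ 2) := by linarith
    have hbA : Tendsto (fun t : ℝ => t * (x ^ 2 + y ^ 2) * kap (t * (-(x ^ 2 + y ^ 2 - z ^ 2))))
        atTop (nhds ((x ^ 2 + y ^ 2) / (-(x ^ 2 + y ^ 2 - z ^ 2)))) := tendsto_tc_kap_pos _ hnf
    have hLpos : 0 < 1 + (x ^ 2 + y ^ 2) / (-(x ^ 2 + y ^ 2 - z ^ 2)) := by positivity
    have hb : Tendsto (fun t => gbar t (x, y, z)) atTop
        (nhds (1 / Real.sqrt (1 + (x ^ 2 + y ^ 2) / (-(x ^ 2 + y ^ 2 - z ^ 2))))) :=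
      (tendsto_invsqrt_nhds hLpos hbA).congr fun t => (hbar t).symm
    have hne : x ^ 2 + y ^ 2 - z ^ 2 ≠ 0 := hneg.ne
    have hval : z * (1 / Real.sqrt (1 + (x ^ 2 + y ^ 2) / (-(x ^ 2 + y ^ 2 - z ^ 2)))) =
        Real.sign z * Real.sqrt (-(x ^ 2 + y ^ 2 - z ^ 2)) := by
      have h1 : 1 + (x ^ 2 + y ^ 2) / (-(x ^ 2 + y ^ 2 - z ^ 2)) =
          z ^ 2 / (-(x ^ 2 + y ^ 2 - z ^ 2)) := by
        rw [add_div' _ _ _ hnf.ne']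
        congr 1
        ring
      rw [h1, Real.sqrt_div (by positivity) _, Real.sqrt_sq_eq_abs, one_div_div]
      rcases hz.lt_or_gt with hzn | hzp
      · rw [Real.sign_of_neg hzn, abs_of_neg hzn, neg_one_mul, ← mul_div_assoc, div_neg,
          mul_comm z (Real.sqrt (-(x ^ 2 + y ^ 2 - z ^ 2))), mul_div_assoc, div_self hz, mul_one]
      · rw [Real.sign_of_pos hzp, abs_of_pos hzp, one_mul, ← mul_div_assoc,
          mul_comm z (Real.sqrt (-(x ^ 2 + y ^ 2 - z ^ 2))), mul_div_assoc, div_self hz, mul_one]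
    have hpx : pX (x, y, z) = (0, 0, Real.sign z * Real.sqrt (-(x ^ 2 + y ^ 2 - z ^ 2))) := by
      rw [pX, if_neg (by rw [hf]; linarith), if_pos (by rw [hf]; exact hneg)]
      rfl
    rw [hpx]
    refine Tendsto.prodMk_nhds ?_ (Tendsto.prodMk_nhds ?_ ?_)
    · simpa using hg0.const_mul x
    · simpa using hg0.const_mul y
    · rw [← hval]; exact hb.const_mul z
  · -- f = 0
    have hpx : pX (x, y, z) = 0 := by
      rw [pX, if_neg (by rw [hf]; linarith), if_neg (by rw [hf]; linarith)]
    rw [hpx]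
    have hz2r2 : x ^ 2 + y ^ 2 = z ^ 2 := by linarith
    by_cases hz : z = 0
    · have hx : x = 0 := by nlinarith
      have hy : y = 0 := by nlinarith
      subst hx; subst hy; subst hz
      simp only [flowW, zero_mul]
      exact tendsto_const_nhds
    · have hz2 : 0 < z ^ 2 := by positivity
      have hr2 : 0 < x ^ 2 + y ^ 2 := by rw [hz2r2]; exact hz2
      have hgA : Tendsto (fun t : ℝ => t * z ^ 2 * kap (t * (x ^ 2 + y ^ 2 - z ^ 2)))
          atTop atTop := by
        have h2 : Tendsto (fun t : ℝ => t * (z ^ 2 * 2)) atTop atTop :=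
          Tendsto.atTop_mul_const (by positivity) tendsto_id
        refine h2.congr fun t => ?_
        rw [show t * (x ^ 2 + y ^ 2 - z ^ 2) = 0 by rw [hzero, mul_zero], kap_zero]
        ring
      have hbA : Tendsto (fun t : ℝ => t * (x ^ 2 + y ^ 2) * kap (t * (-(x ^ 2 + y ^ 2 - z ^ 2))))
          atTop atTop := by
        have h2 : Tendsto (fun t : ℝ => t * ((x ^ 2 + y ^ 2) * 2)) atTop atTop :=
          Tendsto.atTop_mul_const (by positivity) tendsto_id
        refine h2.congr fun t => ?_
        rw [show t * (-(x ^ 2 + y ^ 2 - z ^ 2)) = 0 by rw [hzero]; ring, kap_zero]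
        ring
      have hg0 : Tendsto (fun t => gfun t (x, y, z)) atTop (nhds 0) := by
        refine (tendsto_invsqrt_atTop hgA).congr fun t => ?_
        simp only [gfun, hf]
      have hb0 : Tendsto (fun t => gbar t (x, y, z)) atTop (nhds 0) :=
        (tendsto_invsqrt_atTop hbA).congr fun t => (hbar t).symm
      refine Tendsto.prodMk_nhds ?_ (Tendsto.prodMk_nhds ?_ ?_)
      · simpa using hg0.const_mul x
      · simpa using hg0.const_mul y
      · simpa using hb0.const_mul z
  · -- f > 0 : r² > 0
    have hr2 : 0 < x ^ 2 + y ^ 2 := by nlinarith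
    have hgA : Tendsto (fun t : ℝ => t * z ^ 2 * kap (t * (x ^ 2 + y ^ 2 - z ^ 2))) atTop
        (nhds (z ^ 2 / (x ^ 2 + y ^ 2 - z ^ 2))) := tendsto_tc_kap_pos _ hpos
    have hLpos : 0 < 1 + z ^ 2 / (x ^ 2 + y ^ 2 - z ^ 2) := by positivity
    have hg : Tendsto (fun t => gfun t (x, y, z)) atTop
        (nhds (1 / Real.sqrt (1 + z ^ 2 / (x ^ 2 + y ^ 2 - z ^ 2)))) := by
      refine (tendsto_invsqrt_nhds hLpos hgA).congr fun t => ?_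
      simp only [gfun, hf]
    have hbA : Tendsto (fun t : ℝ => t * (x ^ 2 + y ^ 2) * kap (t * (-(x ^ 2 + y ^ 2 - z ^ 2))))
        atTop atTop := tendsto_tc_kap_neg hr2 (by linarith)
    have hb0 : Tendsto (fun t => gbar t (x, y, z)) atTop (nhds 0) :=
      (tendsto_invsqrt_atTop hbA).congr fun t => (hbar t).symm
    have hGval : (1 : ℝ) / Real.sqrt (1 + z ^ 2 / (x ^ 2 + y ^ 2 - z ^ 2)) =
        Real.sqrt (x ^ 2 + y ^ 2 - z ^ 2) / Real.sqrt (x ^ 2 + y ^ 2) := by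
      have h1 : 1 + z ^ 2 / (x ^ 2 + y ^ 2 - z ^ 2) =
          (x ^ 2 + y ^ 2) / (x ^ 2 + y ^ 2 - z ^ 2) := by
        rw [add_div' _ _ _ hpos.ne']
        congr 1
        ring
      rw [h1, Real.sqrt_div (by positivity) _, one_div_div]
    have hpx : pX (x, y, z) =
        (x / Real.sqrt (x ^ 2 + y ^ 2) * Real.sqrt (x ^ 2 + y ^ 2 - z ^ 2),
         y / Real.sqrt (x ^ 2 + y ^ 2) * Real.sqrt (x ^ 2 + y ^ 2 - z ^ 2), 0) := by
      rw [pX, if_pos (by rw [hf]; exact hpos)]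
      rfl
    rw [hpx]
    refine Tendsto.prodMk_nhds ?_ (Tendsto.prodMk_nhds ?_ ?_)
    · have h2 := hg.const_mul x
      rw [hGval] at h2
      have heq : x / Real.sqrt (x ^ 2 + y ^ 2) * Real.sqrt (x ^ 2 + y ^ 2 - z ^ 2) =
          x * (Real.sqrt (x ^ 2 + y ^ 2 - z ^ 2) / Real.sqrt (x ^ 2 + y ^ 2)) := by ring
      rw [heq]; exact h2
    · have h2 := hg.const_mul y
      rw [hGval] at h2
      have heq : y / Real.sqrt (x ^ 2 + y ^ 2) * Real.sqrt (x ^ 2 + y ^ 2 - z ^ 2) =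
          y * (Real.sqrt (x ^ 2 + y ^ 2 - z ^ 2) / Real.sqrt (x ^ 2 + y ^ 2)) := by ring
      rw [heq]; exact h2
    · simpa using hb0.const_mul z
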